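/- Let Φ₁, Φ₂ : A₂ → A₁ be algebra homomorphisms, K : span(C₂) → A₁ a ℤ-linear map on the span of generators, and Ω : A₂ → A₁ the ℤ-linear map defined on words by Ω(c₁⋯c_m) = Σ_{j=1}^m Φ₁(c₁⋯c_{j-1}) K(c_j) Φ₂(c_{j+1}⋯c_m). Let ε₁ be an augmentation of A₁ with ε₁ ∘ Φ₁ = ε₁ ∘ Φ₂ =: ε₂, and define Ω^{ε₁}(c₁⋯c_m) := Σ_{j=1}^m Φ₁^{ε₁}(c₁⋯c_{j-1}) K^{ε₁}(c_j) Φ₂^{ε₁}(c_{j+1}⋯c_m), where Φᵢ^{ε₁} = φ^{ε₁}∘Φᵢ∘φ^{-ε₂} and K^{ε₁} = φ^{ε₁}∘K∘φ^{-ε₂}. Then Ω^{ε₁} = φ^{ε₁} ∘ Ω ∘ φ^{-ε₂}. -/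

import Mathlib

/-- The free `ℤ`-algebra on a type `C`, realized as the monoid algebra of the free
monoid, so that the word-length decomposition is manifest. -/
abbrev FA (C : Type*) := MonoidAlgebra ℤ (FreeMonoid C)

/-- The generator `c` as an element of the free algebra. -/
noncomputable def gen {C : Type*} (c : C) : FA C :=
  MonoidAlgebra.of ℤ (FreeMonoid C) (FreeMonoid.of c)

/-- The projection `π_k` onto the span of words of length `k`. -/
noncomputable def proj {C : Type*} (k : ℕ) : FA C →ₗ[ℤ] FA C :=
  (MonoidAlgebra.coeffLinearEquiv ℤ).symm.toLinearMap ∘ₗ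
  Finsupp.lsum ℤ (fun w : FreeMonoid C =>
    if (FreeMonoid.toList w).length = k then (Finsupp.lsingle w : ℤ →ₗ[ℤ] (FreeMonoid C →₀ ℤ)) else 0)
    ∘ₗ (MonoidAlgebra.coeffLinearEquiv ℤ).toLinearMap

/-- The algebra homomorphism determined by a function on generators. -/
noncomputable def algOf {C A : Type*} [Semiring A] [Algebra ℤ A] (g : C → A) :
    FA C →ₐ[ℤ] A :=
  (MonoidAlgebra.lift ℤ A (FreeMonoid C)) (FreeMonoid.lift g)

/-- `φ^ε`, sending each generator `c` to `c + ε(c)·1`. -/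
noncomputable def phiP {C : Type*} (ε : FA C →ₐ[ℤ] ℤ) : FA C →ₐ[ℤ] FA C :=
  algOf (fun c => gen c + algebraMap ℤ (FA C) (ε (gen c)))

/-- `φ^{-ε}`, sending each generator `c` to `c - ε(c)·1`. -/
noncomputable def phiM {C : Type*} (ε : FA C →ₐ[ℤ] ℤ) : FA C →ₐ[ℤ] FA C :=
  algOf (fun c => gen c - algebraMap ℤ (FA C) (ε (gen c)))

/-- The word `c₁ ⋯ c_m` associated to a list of generators. -/
noncomputable def wordProd {C : Type*} (l : List C) : FA C := (l.map gen).prod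

/-- The `ℤ`-linear map `Ω` determined on words by
`Ω(c₁⋯c_m) = Σ_{j=1}^m f₁(c₁⋯c_{j-1}) kf(c_j) f₂(c_{j+1}⋯c_m)`. -/
noncomputable def omegaMap {C₁ C₂ : Type*} (f₁ f₂ : FA C₂ →ₐ[ℤ] FA C₁)
    (kf : C₂ → FA C₁) : FA C₂ →ₗ[ℤ] FA C₁ :=
  (Finsupp.linearCombination ℤ (fun w : FreeMonoid C₂ =>
    ∑ i : Fin (FreeMonoid.toList w).length,
      f₁ (wordProd ((FreeMonoid.toList w).take i)) *
        kf ((FreeMonoid.toList w).get i) *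
          f₂ (wordProd ((FreeMonoid.toList w).drop (i + 1)))))
    ∘ₗ (MonoidAlgebra.coeffLinearEquiv ℤ).toLinearMap
section Aux
variable {C C₁ C₂ : Type*}

lemma algOf_gen {A : Type*} [Semiring A] [Algebra ℤ A] (g : C → A) (c : C) :
    algOf g (gen c) = g c := by
  simp [algOf, gen]

lemma wordProd_nil : wordProd ([] : List C) = 1 := rfl

lemma wordProd_cons (c : C) (l : List C) : wordProd (c :: l) = gen c * wordProd l := by
  simp [wordProd]

lemma wordProd_append (u v : List C) : wordProd (u ++ v) = wordProd u * wordProd v := by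
  simp [wordProd]

lemma single_eq_wordProd (l : List C) :
    (MonoidAlgebra.single (FreeMonoid.ofList l) (1:ℤ) : FA C) = wordProd l := by
  induction l with
  | nil => rfl
  | cons c l ih =>
    have h : (MonoidAlgebra.single (FreeMonoid.of c) (1:ℤ) *
          MonoidAlgebra.single (FreeMonoid.ofList l) (1:ℤ) : FA C) =
        MonoidAlgebra.single (FreeMonoid.of c * FreeMonoid.ofList l) (1:ℤ) := by
      have h0 := MonoidAlgebra.single_mul_single (R := ℤ) (M := FreeMonoid C)
        (FreeMonoid.of c) (FreeMonoid.ofList l) 1 1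
      rw [one_mul] at h0
      exact h0
    rw [FreeMonoid.ofList_cons, wordProd_cons, ← ih]
    exact h.symm

lemma single_one_eq_wordProd (a : FreeMonoid C) :
    (MonoidAlgebra.single a (1:ℤ) : FA C) = wordProd (FreeMonoid.toList a) := by
  rw [← single_eq_wordProd]
  rfl

variable (f₁ f₂ : FA C₂ →ₐ[ℤ] FA C₁) (kf : C₂ → FA C₁)

lemma omega_wordProd (l : List C₂) :
    omegaMap f₁ f₂ kf (wordProd l) =
      ∑ i : Fin l.length,
        f₁ (wordProd (l.take i)) * kf (l.get i) * f₂ (wordProd (l.drop (i + 1))) := by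
  rw [← single_eq_wordProd, omegaMap, LinearMap.comp_apply]
  erw [Finsupp.linearCombination_single, one_smul]
  rfl

lemma omega_one : omegaMap f₁ f₂ kf 1 = 0 := by
  have := omega_wordProd f₁ f₂ kf ([] : List C₂)
  simpa [wordProd_nil] using this

lemma omega_cons (c : C₂) (l : List C₂) :
    omegaMap f₁ f₂ kf (wordProd (c :: l)) =
      kf c * f₂ (wordProd l) + f₁ (gen c) * omegaMap f₁ f₂ kf (wordProd l) := by
  rw [omega_wordProd, omega_wordProd]
  simp only [List.length_cons]
  rw [Fin.sum_univ_succ]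
  congr 1
  · simp [wordProd_nil]
  · rw [Finset.mul_sum]
    apply Finset.sum_congr rfl
    intro i _
    simp [wordProd_cons, mul_assoc]

lemma omega_gen (c : C₂) : omegaMap f₁ f₂ kf (gen c) = kf c := by
  have := omega_cons f₁ f₂ kf c []
  simpa [wordProd_cons, wordProd_nil, omega_one] using this

lemma omega_word_mul (u v : List C₂) :
    omegaMap f₁ f₂ kf (wordProd u * wordProd v) =
      omegaMap f₁ f₂ kf (wordProd u) * f₂ (wordProd v) +
        f₁ (wordProd u) * omegaMap f₁ f₂ kf (wordProd v) := by
  induction u with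
  | nil => simp [wordProd_nil, omega_one]
  | cons c u ih =>
    have h1 : wordProd (c :: u) * wordProd v = wordProd (c :: (u ++ v)) := by
      simp [wordProd_cons, wordProd_append, mul_assoc]
    rw [h1, omega_cons, omega_cons, wordProd_append, ih, wordProd_cons, map_mul, map_mul]
    simp only [mul_add, add_mul, mul_assoc]
    abel

lemma omega_mul (x y : FA C₂) :
    omegaMap f₁ f₂ kf (x * y) =
      omegaMap f₁ f₂ kf x * f₂ y + f₁ x * omegaMap f₁ f₂ kf y := by
  induction x using MonoidAlgebra.induction_linear with
  | zero => simp
  | add a b ha hb =>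
    simp only [add_mul, map_add, ha, hb]; abel
  | single a r =>
    induction y using MonoidAlgebra.induction_linear with
    | zero => simp
    | add p q hp hq =>
      simp only [mul_add, map_add, hp, hq]; abel
    | single w s =>
      have ha : (MonoidAlgebra.single a r : FA C₂) = r • MonoidAlgebra.single a 1 := by
        rw [MonoidAlgebra.smul_single', mul_one]
      have hw : (MonoidAlgebra.single w s : FA C₂) = s • MonoidAlgebra.single w 1 := by
        rw [MonoidAlgebra.smul_single', mul_one]
      rw [ha, hw, smul_mul_assoc, mul_smul_comm, map_smul, map_smul,
        single_one_eq_wordProd a, single_one_eq_wordProd w, omega_word_mul]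
      simp only [map_smul, smul_add, smul_smul, smul_mul_assoc, mul_smul_comm]
      rw [mul_comm s r]

lemma omega_algebraMap (r : ℤ) :
    omegaMap f₁ f₂ kf (algebraMap ℤ (FA C₂) r) = 0 := by
  rw [Algebra.algebraMap_eq_smul_one, map_smul, omega_one, smul_zero]

end Aux

/-- `Ω^{ε₁} = φ^{ε₁} ∘ Ω ∘ φ^{-ε₂}`: the augmented homotopy operator, defined on words
via the augmented maps `Φᵢ^{ε₁} = φ^{ε₁}∘Φᵢ∘φ^{-ε₂}` and `K^{ε₁} = φ^{ε₁}∘K∘φ^{-ε₂}`,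
agrees with the conjugate of `Ω` by the augmentation automorphisms. Here `K` is the
linear extension of a map on the span of generators with `K(1) = 0`. -/
theorem stmt_11 {C₁ C₂ : Type*}
    (Φ₁ Φ₂ : FA C₂ →ₐ[ℤ] FA C₁)
    (K : FA C₂ →ₗ[ℤ] FA C₁) (hK : K 1 = 0)
    (ε₁ : FA C₁ →ₐ[ℤ] ℤ) (hε : ε₁.comp Φ₁ = ε₁.comp Φ₂) :
    omegaMap ((phiP ε₁).comp (Φ₁.comp (phiM (ε₁.comp Φ₁))))
        ((phiP ε₁).comp (Φ₂.comp (phiM (ε₁.comp Φ₁))))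
        (fun c => phiP ε₁ (K (phiM (ε₁.comp Φ₁) (gen c)))) =
      (phiP ε₁).toLinearMap ∘ₗ
        (omegaMap Φ₁ Φ₂ (fun c => K (gen c))) ∘ₗ (phiM (ε₁.comp Φ₁)).toLinearMap := by
  have hKm : ∀ c : C₂, K (phiM (ε₁.comp Φ₁) (gen c)) = K (gen c) := by
    intro c
    rw [phiM, algOf_gen, map_sub, Algebra.algebraMap_eq_smul_one, map_smul, hK,
      smul_zero, sub_zero]
  have hΩgen : ∀ c : C₂, omegaMap Φ₁ Φ₂ (fun c => K (gen c)) (phiM (ε₁.comp Φ₁) (gen c)) =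
      K (gen c) := by
    intro c
    rw [phiM, algOf_gen, map_sub, omega_gen, omega_algebraMap, sub_zero]
  have key : ∀ l : List C₂,
      omegaMap ((phiP ε₁).comp (Φ₁.comp (phiM (ε₁.comp Φ₁))))
          ((phiP ε₁).comp (Φ₂.comp (phiM (ε₁.comp Φ₁))))
          (fun c => phiP ε₁ (K (phiM (ε₁.comp Φ₁) (gen c)))) (wordProd l) =
        phiP ε₁ (omegaMap Φ₁ Φ₂ (fun c => K (gen c))
          (phiM (ε₁.comp Φ₁) (wordProd l))) := by
    intro l
    induction l with
    | nil => simp [wordProd_nil, omega_one]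
    | cons c l ih =>
      rw [omega_cons, ih, wordProd_cons, map_mul, omega_mul, map_add, map_mul, map_mul,
        hΩgen]
      simp only [AlgHom.comp_apply]
      rw [hKm]
  refine MonoidAlgebra.lhom_ext' fun a => LinearMap.ext fun b => ?_
  rw [LinearMap.comp_apply, LinearMap.comp_apply, MonoidAlgebra.lsingle_apply]
  have hb : (MonoidAlgebra.single a b : FA C₂) = b • wordProd (FreeMonoid.toList a) := by
    rw [← single_one_eq_wordProd, MonoidAlgebra.smul_single', mul_one]
  rw [hb, map_smul, map_smul]
  exact congrArg (fun z => b • z) (key (FreeMonoid.toList a))
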